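/- Let E be an infinite-dimensional vector space and I a countably infinite set. Let φ : I → I be such that for every family (e_i)_{i∈I} in E the following implication P((e_i), φ) holds: if there exists a linear operator T from span{e_i : i∈I} to E with T(e_i) = e_{φ(i)} for all i∈I and span{e_i : i∈I} is infinite-dimensional, then (e_i)_{i∈I} is linearly independent. Then there exists a ∈ I with Orb_φ(a) = I. -/

import Mathlib

open Function Set

lemma exists_extend_linearMap {K : Type*} [Field K] {E : Type*} [AddCommGroup E] [Module K E]
    {I : Type*} {v : I → E} (hv : LinearIndependent K v)
    (w : I → E) : ∃ F : E →ₗ[K] E, ∀ j, F (v j) = w j := by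
  classical
  have hs := (linearIndepOn_id_range_iff hv.injective).mpr hv
  refine ⟨(Module.Basis.extend hs).constr K
      (fun x => if h : ∃ j, v j = (x : E) then w h.choose else 0), fun j => ?_⟩
  have hmem : v j ∈ hs.extend (Set.subset_univ _) := hs.subset_extend _ ⟨j, rfl⟩
  have hb : v j = Module.Basis.extend hs ⟨v j, hmem⟩ := (Module.Basis.extend_apply_self hs ⟨v j, hmem⟩).symm
  rw [hb, Module.Basis.constr_basis]
  have h : ∃ j', v j' = ((⟨v j, hmem⟩ : hs.extend (Set.subset_univ _)) : E) := ⟨j, rfl⟩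
  rw [dif_pos h]
  exact congrArg w (hv.injective h.choose_spec)

theorem stmt_13 {K : Type*} [Field K] {E : Type*} [AddCommGroup E] [Module K E]
    (hE : ¬ Module.Finite K E)
    {I : Type*} [Countable I] [Infinite I]
    (φ : I → I)
    (hP : ∀ e : I → E,
      (∃ T : ↥(Submodule.span K (Set.range e)) →ₗ[K] E,
        ∀ i : I, T ⟨e i, Submodule.subset_span (Set.mem_range_self i)⟩ = e (φ i)) →
      ¬ Module.Finite K ↥(Submodule.span K (Set.range e)) →
      LinearIndependent K e) :
    ∃ a : I, Set.range (fun n : ℕ => φ^[n] a) = Set.univ := by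
  classical
  -- an infinite linearly independent family indexed by I
  have hrank : (Cardinal.aleph0 : Cardinal) ≤ Module.rank K E := by
    by_contra h
    exact hE (Module.rank_lt_aleph0_iff.mp (lt_of_not_ge h))
  obtain ⟨s, hs_card, hs_li⟩ := le_rank_iff_exists_linearIndependent.mp hrank
  have : Infinite s := by
    rw [Set.infinite_coe_iff, ← Set.infinite_coe_iff]
    have : Infinite s := Cardinal.infinite_iff.mpr (le_of_eq hs_card.symm)
    exact this
  obtain ⟨ι, hι⟩ := Countable.exists_injective_nat I
  let emb : ℕ ↪ s := Infinite.natEmbedding s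
  set v : I → E := fun i => ((emb (ι i) : s) : E) with hv_def
  have hv : LinearIndependent K v :=
    hs_li.comp (fun i => emb (ι i)) (emb.injective.comp hι)
  -- generic construction: given e and a proof that F∘e = e∘φ pointwise for some linear F,
  -- plus witnesses of infinite span, get LinearIndependent e
  have construct : ∀ e : I → E, (∃ F : E →ₗ[K] E, ∀ i, F (e i) = e (φ i)) →
      ¬ Module.Finite K ↥(Submodule.span K (Set.range e)) → LinearIndependent K e := by
    intro e ⟨F, hF⟩ hnf
    refine hP e ⟨F.domRestrict _, fun i => ?_⟩ hnf
    simpa using hF i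
  -- infinite-dimensionality helper: if e agrees with v on an infinite set, the span is big
  have bigspan : ∀ (e : I → E) (s' : Set I), s'.Infinite → (∀ j ∈ s', e j = v j) →
      ¬ Module.Finite K ↥(Submodule.span K (Set.range e)) := by
    intro e s' hs' hagree hfin
    have : Infinite s' := hs'.to_subtype
    refine Module.Finite.not_linearIndependent_of_infinite (R := K)
      (fun j : s' => (⟨e j, Submodule.subset_span (Set.mem_range_self (j : I))⟩ :
        ↥(Submodule.span K (Set.range e)))) ?_
    apply LinearIndependent.of_comp (Submodule.span K (Set.range e)).subtype
    have : ((Submodule.span K (Set.range e)).subtype ∘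
        fun j : s' => (⟨e j, Submodule.subset_span (Set.mem_range_self (j : I))⟩ :
          ↥(Submodule.span K (Set.range e)))) = fun j : s' => v (j : I) := by
      funext j; exact hagree j j.2
    rw [this]
    exact hv.comp _ Subtype.val_injective
  by_contra hno
  push_neg at hno
  -- Case 1: some orbit has infinite complement
  by_cases hbig : ∃ a : I, ((Set.range fun n : ℕ => φ^[n] a)ᶜ).Infinite
  · obtain ⟨a, ha⟩ := hbig
    set C : Set I := Set.range fun n : ℕ => φ^[n] a with hC
    have hCfwd : ∀ i ∈ C, φ i ∈ C := by
      rintro i ⟨n, rfl⟩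
      exact ⟨n + 1, Function.iterate_succ_apply' φ n a⟩
    set e : I → E := fun i => if i ∈ C then 0 else v i with he
    obtain ⟨F, hF⟩ := exists_extend_linearMap hv (fun j => e (φ j))
    have hTe : ∀ i, F (e i) = e (φ i) := by
      intro i
      by_cases hi : i ∈ C
      · simp only [he, if_pos hi, map_zero, if_pos (hCfwd i hi)]
      · simp only [he, if_neg hi]; exact hF i
    have hli := construct e ⟨F, hTe⟩ (bigspan e Cᶜ ha (fun j hj => by simp only [he]; rw [if_neg hj]))
    have haC : a ∈ C := ⟨0, rfl⟩
    exact hli.ne_zero a (by simp [he, haC])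
  -- Case 2: all orbit complements are finite
  push_neg at hbig
  -- φ must be injective
  have hinj : Function.Injective φ := by
    intro a b hab
    by_contra hne
    set e : I → E := fun i => if i = b then v a else v i with he
    obtain ⟨F, hF⟩ := exists_extend_linearMap hv (fun j => e (φ j))
    have hTe : ∀ i, F (e i) = e (φ i) := by
      intro i
      by_cases hi : i = b
      · subst hi; simp only [he, if_pos rfl]; rw [hF a, ← hab]
      · simp only [he, if_neg hi]; exact hF i
    have hinf : ({b}ᶜ : Set I).Infinite := Set.Finite.infinite_compl (Set.finite_singleton b)
    have hli := construct e ⟨F, hTe⟩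
      (bigspan e ({b}ᶜ) hinf (fun j hj => by simp only [he]; rw [if_neg (by simpa using hj)]))
    apply hne
    apply hli.injective
    simp only [he, if_pos rfl, if_neg hne]
  -- descent: orbits with strictly smaller finite complement
  have step : ∀ a : I, ∃ b : I,
      ((Set.range fun n : ℕ => φ^[n] b)ᶜ) ⊂ ((Set.range fun n : ℕ => φ^[n] a)ᶜ) := by
    intro a
    obtain ⟨b, hb⟩ := (Set.ne_univ_iff_exists_notMem _).mp (hno a)
    have horb_inf : (Set.range fun n : ℕ => φ^[n] a).Infinite := by
      have := (hbig a).infinite_compl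
      rwa [compl_compl] at this
    have hmeet : ∃ x, x ∈ (Set.range fun n : ℕ => φ^[n] a) ∧
        x ∈ (Set.range fun n : ℕ => φ^[n] b) := by
      by_contra h
      push_neg at h
      have hsub : (Set.range fun n : ℕ => φ^[n] a) ⊆ ((Set.range fun n : ℕ => φ^[n] b)ᶜ) :=
        fun x hx => h x hx
      exact horb_inf ((hbig b).subset hsub)
    obtain ⟨x, ⟨m, hm⟩, ⟨n, hn⟩⟩ := hmeet
    have hm' : φ^[m] a = x := hm
    have hn' : φ^[n] b = x := hn
    have hnm : m < n := by
      by_contra h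
      push_neg at h
      apply hb
      refine ⟨m - n, ?_⟩
      have : φ^[n] (φ^[m - n] a) = φ^[n] b := by
        rw [← Function.iterate_add_apply, Nat.add_sub_cancel' h, hm', hn']
      show φ^[m - n] a = b
      exact hinj.iterate n this
    have hab : φ^[n - m] b = a := by
      have : φ^[m] (φ^[n - m] b) = φ^[m] a := by
        rw [← Function.iterate_add_apply, Nat.add_sub_cancel' hnm.le, hn', hm']
      exact hinj.iterate m this
    have hsub : (Set.range fun n : ℕ => φ^[n] a) ⊆ (Set.range fun k : ℕ => φ^[k] b) := by
      rintro y ⟨k, rfl⟩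
      refine ⟨k + (n - m), ?_⟩
      show φ^[k + (n - m)] b = φ^[k] a
      rw [Function.iterate_add_apply, hab]
    refine ⟨b, ?_⟩
    rw [Set.ssubset_iff_of_subset (Set.compl_subset_compl.mpr hsub)]
    exact ⟨b, hb, by simp only [Set.mem_compl_iff, not_not]; exact ⟨0, rfl⟩⟩
  have down : ∀ N : ℕ, ∀ a : I, ((Set.range fun n : ℕ => φ^[n] a)ᶜ).ncard ≤ N → False := by
    intro N
    induction N with
    | zero =>
      intro a h
      obtain ⟨b, hb⟩ := (Set.ne_univ_iff_exists_notMem _).mp (hno a)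
      have hpos : 0 < ((Set.range fun n : ℕ => φ^[n] a)ᶜ).ncard :=
        (Set.ncard_pos (hbig a)).mpr ⟨b, hb⟩
      omega
    | succ N ih =>
      intro a h
      obtain ⟨b, hlt⟩ := step a
      have := Set.ncard_lt_ncard hlt (hbig a)
      exact ih b (by omega)
  obtain ⟨a0⟩ : Nonempty I := inferInstance
  exact (down _ a0 le_rfl).elim
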